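/- Let {u^k} and {v^k} be nonnegative sequences, λ ∈ (0,1), R ≥ 0, with u^{k+1} ≤ R λ^k + Σ_{l=0}^k λ^{k-l} v^l for all k ≥ 0. Then for every k ≥ 1, Σ_{l=0}^k (u^l)^2 ≤ (u^0)^2 + 2R^2/(1-λ^2) + (2/(1-λ)^2) Σ_{l=0}^k (v^l)^2. -/

import Mathlib

private lemma geom_le_aux (lam : ℝ) (h0 : 0 ≤ lam) (h1 : lam < 1) (n : ℕ) :
    ∑ i ∈ Finset.range n, lam ^ i ≤ 1 / (1 - lam) := by
  have hne : lam ≠ 1 := by linarith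
  rw [geom_sum_eq hne]
  have h2 : (lam ^ n - 1) / (lam - 1) = (1 - lam ^ n) / (1 - lam) := by
    rw [← neg_div_neg_eq]; ring_nf
  rw [h2]
  have hpos : 0 < 1 - lam := by linarith
  have hpn : 0 ≤ lam ^ n := pow_nonneg h0 n
  gcongr
  linarith

theorem sum_sq_of_geometric_convolution (u v : ℕ → ℝ)
    (hu : ∀ k, 0 ≤ u k) (hv : ∀ k, 0 ≤ v k)
    (lam : ℝ) (hlam : 0 < lam ∧ lam < 1) (R : ℝ) (hR : 0 ≤ R)
    (hrec : ∀ k : ℕ, u (k + 1) ≤ R * lam ^ k + ∑ l ∈ Finset.range (k + 1), lam ^ (k - l) * v l) :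
    ∀ k : ℕ, 1 ≤ k →
      ∑ l ∈ Finset.range (k + 1), (u l) ^ 2 ≤
        (u 0) ^ 2 + 2 * R ^ 2 / (1 - lam ^ 2) +
          (2 / (1 - lam) ^ 2) * ∑ l ∈ Finset.range (k + 1), (v l) ^ 2 := by
  obtain ⟨hl0, hl1⟩ := hlam
  have hl0' : (0:ℝ) ≤ lam := le_of_lt hl0
  have h1l : (0:ℝ) < 1 - lam := by linarith
  have hsq : (0:ℝ) < 1 - lam ^ 2 := by nlinarith
  intro k hk
  -- Cauchy-Schwarz bound on the convolution term
  have hcs : ∀ j : ℕ, (∑ l ∈ Finset.range (j + 1), lam ^ (j - l) * v l) ^ 2 ≤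
      (1 / (1 - lam)) * ∑ l ∈ Finset.range (j + 1), lam ^ (j - l) * v l ^ 2 := by
    intro j
    have h := Finset.sum_sq_le_sum_mul_sum_of_sq_eq_mul (Finset.range (j + 1))
      (r := fun l => lam ^ (j - l) * v l) (f := fun l => lam ^ (j - l))
      (g := fun l => lam ^ (j - l) * v l ^ 2)
      (fun i _ => pow_nonneg hl0' _)
      (fun i _ => mul_nonneg (pow_nonneg hl0' _) (sq_nonneg _))
      (fun i _ => by ring)
    refine h.trans ?_
    have hgeom : ∑ l ∈ Finset.range (j + 1), lam ^ (j - l) ≤ 1 / (1 - lam) := by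
      have hre := Finset.sum_range_reflect (fun l => lam ^ l) (j + 1)
      simp only [Nat.add_sub_cancel] at hre
      calc ∑ l ∈ Finset.range (j + 1), lam ^ (j - l)
          = ∑ l ∈ Finset.range (j + 1), lam ^ l := hre
        _ ≤ 1 / (1 - lam) := geom_le_aux lam hl0' hl1 _
    have hnn : 0 ≤ ∑ l ∈ Finset.range (j + 1), lam ^ (j - l) * v l ^ 2 :=
      Finset.sum_nonneg fun i _ => mul_nonneg (pow_nonneg hl0' _) (sq_nonneg _)
    exact mul_le_mul_of_nonneg_right hgeom hnn
  -- termwise bound on u (j+1)^2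
  have hterm : ∀ j : ℕ, u (j + 1) ^ 2 ≤
      2 * R ^ 2 * (lam ^ 2) ^ j +
        (2 / (1 - lam)) * ∑ l ∈ Finset.range (j + 1), lam ^ (j - l) * v l ^ 2 := by
    intro j
    set S := ∑ l ∈ Finset.range (j + 1), lam ^ (j - l) * v l with hS
    have hSnn : 0 ≤ S := Finset.sum_nonneg fun i _ =>
      mul_nonneg (pow_nonneg hl0' _) (hv i)
    have h1 : u (j + 1) ^ 2 ≤ (R * lam ^ j + S) ^ 2 := by
      have hr := hrec j
      rw [← hS] at hr
      have hun := hu (j + 1)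
      nlinarith [mul_nonneg hR (pow_nonneg hl0' j)]
    have h2 : (R * lam ^ j + S) ^ 2 ≤ 2 * (R * lam ^ j) ^ 2 + 2 * S ^ 2 := by
      nlinarith [sq_nonneg (R * lam ^ j - S)]
    have h3 : 2 * (R * lam ^ j) ^ 2 = 2 * R ^ 2 * (lam ^ 2) ^ j := by
      rw [show ((lam ^ 2) ^ j) = (lam ^ j) ^ 2 by rw [← pow_mul, ← pow_mul, Nat.mul_comm]]
      ring
    have h4 : 2 * S ^ 2 ≤ (2 / (1 - lam)) *
        ∑ l ∈ Finset.range (j + 1), lam ^ (j - l) * v l ^ 2 := by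
      have hc := hcs j
      rw [← hS] at hc
      calc 2 * S ^ 2 ≤ 2 * ((1 / (1 - lam)) *
            ∑ l ∈ Finset.range (j + 1), lam ^ (j - l) * v l ^ 2) := by linarith
        _ = (2 / (1 - lam)) * ∑ l ∈ Finset.range (j + 1), lam ^ (j - l) * v l ^ 2 := by
            ring
    linarith
  -- swap double sum and bound
  have hswap : ∑ j ∈ Finset.range k, ∑ l ∈ Finset.range (j + 1), lam ^ (j - l) * v l ^ 2 ≤
      (1 / (1 - lam)) * ∑ l ∈ Finset.range k, v l ^ 2 := by
    have heq : ∑ j ∈ Finset.range k, ∑ l ∈ Finset.range (j + 1), lam ^ (j - l) * v l ^ 2 =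
        ∑ l ∈ Finset.range k, ∑ j ∈ Finset.Ico l k, lam ^ (j - l) * v l ^ 2 := by
      simp only [Finset.range_eq_Ico]
      rw [← Finset.sum_Ico_Ico_comm 0 k (fun l j => lam ^ (j - l) * v l ^ 2)]
    rw [heq, Finset.mul_sum]
    refine Finset.sum_le_sum fun l _ => ?_
    rw [Finset.sum_Ico_eq_sum_range]
    calc ∑ i ∈ Finset.range (k - l), lam ^ (l + i - l) * v l ^ 2
        = (∑ i ∈ Finset.range (k - l), lam ^ i) * v l ^ 2 := by
          rw [Finset.sum_mul]
          exact Finset.sum_congr rfl fun i _ => by congr 2; omega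
      _ ≤ (1 / (1 - lam)) * v l ^ 2 :=
          mul_le_mul_of_nonneg_right (geom_le_aux lam hl0' hl1 _) (sq_nonneg _)
  -- geometric sum for the R term
  have hgeo2 : ∑ j ∈ Finset.range k, (lam ^ 2) ^ j ≤ 1 / (1 - lam ^ 2) :=
    geom_le_aux (lam ^ 2) (sq_nonneg lam) (by nlinarith) k
  -- assemble
  rw [Finset.sum_range_succ' (fun l => u l ^ 2) k]
  have hmain : ∑ i ∈ Finset.range k, u (i + 1) ^ 2 ≤
      2 * R ^ 2 / (1 - lam ^ 2) + (2 / (1 - lam) ^ 2) * ∑ l ∈ Finset.range k, v l ^ 2 := by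
    calc ∑ i ∈ Finset.range k, u (i + 1) ^ 2
        ≤ ∑ i ∈ Finset.range k, (2 * R ^ 2 * (lam ^ 2) ^ i +
            (2 / (1 - lam)) * ∑ l ∈ Finset.range (i + 1), lam ^ (i - l) * v l ^ 2) :=
          Finset.sum_le_sum fun i _ => hterm i
      _ = 2 * R ^ 2 * ∑ i ∈ Finset.range k, (lam ^ 2) ^ i +
            (2 / (1 - lam)) * ∑ i ∈ Finset.range k,
              ∑ l ∈ Finset.range (i + 1), lam ^ (i - l) * v l ^ 2 := by
          rw [Finset.sum_add_distrib, Finset.mul_sum, Finset.mul_sum]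
      _ ≤ 2 * R ^ 2 * (1 / (1 - lam ^ 2)) +
            (2 / (1 - lam)) * ((1 / (1 - lam)) * ∑ l ∈ Finset.range k, v l ^ 2) := by
          have hR2 : (0:ℝ) ≤ 2 * R ^ 2 := by positivity
          have h2l : (0:ℝ) ≤ 2 / (1 - lam) := by positivity
          exact add_le_add (mul_le_mul_of_nonneg_left hgeo2 hR2)
            (mul_le_mul_of_nonneg_left hswap h2l)
      _ = 2 * R ^ 2 / (1 - lam ^ 2) + (2 / (1 - lam) ^ 2) * ∑ l ∈ Finset.range k, v l ^ 2 := by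
          field_simp
  have hvlast : ∑ l ∈ Finset.range k, v l ^ 2 ≤ ∑ l ∈ Finset.range (k + 1), v l ^ 2 := by
    rw [Finset.sum_range_succ]
    nlinarith [sq_nonneg (v k)]
  have hcoef : (0:ℝ) ≤ 2 / (1 - lam) ^ 2 := by positivity
  have := mul_le_mul_of_nonneg_left hvlast hcoef
  linarith
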